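/- Let n ≥ 1 and let Δ ⊂ ℝ^n be a compact convex set with n·Π_n ⊆ Δ. Then ivol(Δ) ≥ (1/4)·vol(Δ). Moreover, for any integral box Π containing the origin one has ivol(Π ∩ Δ) ≥ (1/4)·vol(Π ∩ Δ). -/

import Mathlib

open MeasureTheory Pointwise

/-- The cube `[-s,s]^n` in `ℝ^n`. -/
def cube (n : ℕ) (s : ℝ) : Set (Fin n → ℝ) := {x | ∀ i, x i ∈ Set.Icc (-s) s}

/-- The set of integer points of a set `S ⊆ ℝ^n`. -/
def intPts {n : ℕ} (S : Set (Fin n → ℝ)) : Set (Fin n → ℝ) :=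
  {x ∈ S | ∀ i, ∃ k : ℤ, x i = (k : ℝ)}

/-- An integral box `[a_1,b_1] × ⋯ × [a_n,b_n]`. -/
def intBox {n : ℕ} (a b : Fin n → ℤ) : Set (Fin n → ℝ) :=
  {x | ∀ i, x i ∈ Set.Icc (a i : ℝ) (b i : ℝ)}

lemma round_mono' : Monotone (round : ℝ → ℤ) := by
  intro x y hxy
  rw [round_eq, round_eq]
  exact Int.floor_mono (by linarith)

lemma intPts_finite {n : ℕ} {S : Set (Fin n → ℝ)} (hS : Bornology.IsBounded S) :
    (intPts S).Finite := by
  obtain ⟨R, hR⟩ := isBounded_iff_forall_norm_le.1 hS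
  have : intPts S ⊆ Set.pi Set.univ fun _ : Fin n =>
      ((Int.cast : ℤ → ℝ) '' Set.Icc (-⌈R⌉) ⌈R⌉) := by
    rintro x ⟨hxS, hxint⟩ i _
    obtain ⟨k, hk⟩ := hxint i
    refine ⟨k, ?_, hk.symm⟩
    have h1 : |x i| ≤ R := le_trans (by simpa using norm_le_pi_norm x i) (hR x hxS)
    have h2 : |(k : ℝ)| ≤ (⌈R⌉ : ℝ) := by
      rw [← hk]; exact le_trans h1 (Int.le_ceil R)
    have h3 : |k| ≤ ⌈R⌉ := by exact_mod_cast h2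
    rw [abs_le] at h3
    exact Set.mem_Icc.2 h3
  exact Set.Finite.subset (Set.Finite.pi fun _ => (Set.finite_Icc _ _).image _) this

lemma key_count {n : ℕ} (hn : 1 ≤ n) (T : Set (Fin n → ℝ))
    (hfin : (intPts T).Finite)
    (hmap : ∀ x ∈ T,
      (fun i => ((round ((1 - 1/(2*(n:ℝ))) * x i) : ℤ) : ℝ)) ∈ intPts T) :
    (1 / 4 : ℝ) * (volume T).toReal ≤ ((intPts T).ncard : ℝ) := by
  set lam : ℝ := 1 - 1/(2*(n:ℝ)) with hlam_def
  have hn' : (1:ℝ) ≤ n := by exact_mod_cast hn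
  have h2n : (2:ℝ) ≤ 2 * n := by linarith
  have hhalf : 1/(2*(n:ℝ)) ≤ 1/2 := by
    apply div_le_div_of_nonneg_left <;> linarith
  have hhalfpos : 0 < 1/(2*(n:ℝ)) := by positivity
  have hlam_pos : 0 < lam := by rw [hlam_def]; linarith
  have hlam_le1 : lam ≤ 1 := by rw [hlam_def]; linarith
  -- volume of each box
  set box : (Fin n → ℝ) → Set (Fin n → ℝ) :=
    fun p => Set.pi Set.univ fun i => Set.Icc ((p i - 1/2)/lam) ((p i + 1/2)/lam) with hbox
  have hvol_box : ∀ p, volume (box p) = ENNReal.ofReal (1/lam) ^ n := by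
    intro p
    rw [hbox]
    rw [volume_pi_pi]
    have : ∀ i : Fin n, volume (Set.Icc ((p i - 1/2)/lam) ((p i + 1/2)/lam))
        = ENNReal.ofReal (1/lam) := by
      intro i
      rw [Real.volume_Icc, div_sub_div_same]
      norm_num
    simp only [this, Finset.prod_const, Finset.card_univ, Fintype.card_fin]
  -- the cover
  have hcover : T ⊆ ⋃ p ∈ hfin.toFinset, box p := by
    intro x hx
    have hp := hmap x hx
    refine Set.mem_biUnion (hfin.mem_toFinset.2 hp) ?_
    intro i _
    have habs : |lam * x i - (round (lam * x i) : ℝ)| ≤ 1/2 := abs_sub_round _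
    rw [abs_le] at habs
    constructor
    · rw [div_le_iff₀ hlam_pos]; simp only; nlinarith [habs.1, habs.2]
    · rw [le_div_iff₀ hlam_pos]; simp only; nlinarith [habs.1, habs.2]
  have hvol : volume T ≤ (hfin.toFinset.card : ℕ) * ENNReal.ofReal (1/lam) ^ n := by
    calc volume T ≤ volume (⋃ p ∈ hfin.toFinset, box p) := measure_mono hcover
      _ ≤ ∑ p ∈ hfin.toFinset, volume (box p) := measure_biUnion_finset_le _ _
      _ = hfin.toFinset.card * ENNReal.ofReal (1/lam) ^ n := by
          simp [hvol_box, Finset.sum_const, mul_comm]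
  have hne : ((hfin.toFinset.card : ℕ) : ENNReal) * ENNReal.ofReal (1/lam) ^ n ≠ ⊤ :=
    ENNReal.mul_ne_top (ENNReal.natCast_ne_top _) (ENNReal.pow_ne_top ENNReal.ofReal_ne_top)
  have hreal : (volume T).toReal ≤ (hfin.toFinset.card : ℝ) * (1/lam) ^ n := by
    have := ENNReal.toReal_mono hne hvol
    rwa [ENNReal.toReal_mul, ENNReal.toReal_pow, ENNReal.toReal_natCast,
      ENNReal.toReal_ofReal (by positivity)] at this
  have hcard : (intPts T).ncard = hfin.toFinset.card := Set.ncard_eq_toFinset_card _ hfin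
  -- Bernoulli: lam ^ n ≥ 1/2
  have hbern : (1/2 : ℝ) ≤ lam ^ n := by
    have := one_add_mul_le_pow (a := -(1/(2*(n:ℝ)))) (by linarith) n
    have hx : 1 + (n:ℝ) * (-(1/(2*(n:ℝ)))) = 1/2 := by
      field_simp
      ring
    rw [hx] at this
    simpa [hlam_def, sub_eq_add_neg] using this
  have hpow2 : (1/lam) ^ n ≤ 2 := by
    rw [div_pow, one_pow, div_le_iff₀ (by positivity)]
    linarith
  have hcard_nn : (0:ℝ) ≤ (hfin.toFinset.card : ℝ) := by positivity
  rw [hcard]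
  nlinarith [mul_le_mul_of_nonneg_left hpow2 hcard_nn]

lemma intPts_mono {n : ℕ} {S T : Set (Fin n → ℝ)} (h : S ⊆ T) : intPts S ⊆ intPts T :=
  fun x hx => ⟨h hx.1, hx.2⟩

/-- Lemma: if `Δ ⊆ ℝ^n` is compact convex with `n·Π_n ⊆ Δ` then `ivol(Δ) ≥ vol(Δ)/4`;
moreover for any integral box `Π` containing the origin,
`ivol(Π ∩ Δ) ≥ vol(Π ∩ Δ)/4`. -/
theorem stmt_7 (n : ℕ) (hn : 1 ≤ n) (Δ : Set (Fin n → ℝ))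
    (hΔc : IsCompact Δ) (hΔconv : Convex ℝ Δ) (hcube : cube n n ⊆ Δ) :
    (1 / 4 : ℝ) * (volume Δ).toReal ≤ ((intPts Δ).ncard : ℝ) ∧
    ∀ a b : Fin n → ℤ, (0 : Fin n → ℝ) ∈ intBox a b →
      (1 / 4 : ℝ) * (volume (intBox a b ∩ Δ)).toReal ≤
        ((intPts (intBox a b ∩ Δ)).ncard : ℝ) := by
  set lam : ℝ := 1 - 1/(2*(n:ℝ)) with hlam_def
  have hn' : (1:ℝ) ≤ n := by exact_mod_cast hn
  have h2n : (2:ℝ) ≤ 2 * n := by linarith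
  have hhalf : 1/(2*(n:ℝ)) ≤ 1/2 := by
    apply div_le_div_of_nonneg_left <;> linarith
  have hhalfpos : 0 < 1/(2*(n:ℝ)) := by positivity
  have hlam_pos : 0 < lam := by rw [hlam_def]; linarith
  have hlam_le1 : lam ≤ 1 := by rw [hlam_def]; linarith
  have hfinΔ : (intPts Δ).Finite := intPts_finite hΔc.isBounded
  -- the rounded point lies in Δ
  have hmapΔ : ∀ x ∈ Δ, (fun i => ((round (lam * x i) : ℤ) : ℝ)) ∈ Δ := by
    intro x hx
    set p : Fin n → ℝ := fun i => ((round (lam * x i) : ℤ) : ℝ) with hp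
    set v : Fin n → ℝ := fun i => (p i - lam * x i) / (1 - lam) with hv
    have hvΔ : v ∈ Δ := by
      apply hcube
      intro i
      have habs : |lam * x i - p i| ≤ 1/2 := abs_sub_round _
      rw [abs_le] at habs
      have h1lam : 1 - lam = 1/(2*(n:ℝ)) := by rw [hlam_def]; ring
      rw [Set.mem_Icc]
      constructor
      · rw [hv]; simp only; rw [h1lam, le_div_iff₀ hhalfpos]
        have : -(n:ℝ) * (1/(2*(n:ℝ))) = -(1/2) := by field_simp
        rw [this]; linarith [habs.2]
      · rw [hv]; simp only; rw [h1lam, div_le_iff₀ hhalfpos]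
        have : (n:ℝ) * (1/(2*(n:ℝ))) = 1/2 := by field_simp
        rw [this]; linarith [habs.1]
    have hcomb : p = lam • x + (1 - lam) • v := by
      funext i
      have hne1 : (1:ℝ) - lam ≠ 0 := by
        have : 1 - lam = 1/(2*(n:ℝ)) := by rw [hlam_def]; ring
        rw [this]; positivity
      simp only [Pi.add_apply, Pi.smul_apply, smul_eq_mul, hv]
      rw [mul_comm ((1:ℝ) - lam), div_mul_cancel₀ _ hne1]
      ring
    rw [hcomb]
    exact hΔconv hx hvΔ (le_of_lt hlam_pos) (by linarith) (by ring)
  refine ⟨?_, ?_⟩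
  · apply key_count hn Δ hfinΔ
    intro x hx
    exact ⟨hmapΔ x hx, fun i => ⟨round (lam * x i), rfl⟩⟩
  · intro a b hab
    have hsub : intBox a b ∩ Δ ⊆ Δ := Set.inter_subset_right
    apply key_count hn _ (hfinΔ.subset (intPts_mono hsub))
    rintro x ⟨hxB, hxΔ⟩
    refine ⟨⟨?_, hmapΔ x hxΔ⟩, fun i => ⟨round (lam * x i), rfl⟩⟩
    intro i
    have hxi := hxB i
    rw [Set.mem_Icc] at hxi
    have h0 := hab i
    rw [Set.mem_Icc] at h0
    simp only [Pi.zero_apply] at h0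
    have hcast0a : (a i : ℝ) ≤ 0 := h0.1
    have hcast0b : (0:ℝ) ≤ (b i : ℝ) := h0.2
    have hla : (a i : ℝ) ≤ lam * x i := by
      nlinarith [hxi.1, hxi.2, mul_nonneg (le_of_lt hlam_pos) (sub_nonneg.2 hxi.1)]
    have hlb : lam * x i ≤ (b i : ℝ) := by
      nlinarith [hxi.1, hxi.2, mul_nonneg (le_of_lt hlam_pos) (sub_nonneg.2 hxi.2)]
    have h1 : a i ≤ round (lam * x i) := by
      have := round_mono' hla
      rwa [round_intCast] at this
    have h2 : round (lam * x i) ≤ b i := by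
      have := round_mono' hlb
      rwa [round_intCast] at this
    exact Set.mem_Icc.2 ⟨Int.cast_le.2 h1, Int.cast_le.2 h2⟩
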